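/- Assume the abc Conjecture. Then for every real η > 0 there exists a constant C > 0 such that for all real X ≥ 4, the total number of pairs (x, u) of integers with x ≥ 1 and 1 ≤ |5·x^22 − u^2| ≤ 4X is at most C · (X^(6/11) + X^(1/5 + η)). -/

import Mathlib

open Real

/-- The radical of a natural number: the product of its distinct prime factors. -/
def rad (n : ℕ) : ℕ := ∏ p ∈ n.primeFactors, p

/-- The abc Conjecture: for every ε > 0 there is a constant `C > 0` such that for all
nonzero coprime integers `a`, `b`, `c` with `a + b = c` one has
`|c| ≤ C * rad(abc)^(1+ε)`. -/
def ABCConjecture : Prop :=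
  ∀ ε : ℝ, 0 < ε → ∃ C : ℝ, 0 < C ∧ ∀ a b c : ℤ,
    a ≠ 0 → b ≠ 0 → c ≠ 0 → IsCoprime a b → a + b = c →
    ((|c| : ℤ) : ℝ) ≤ C * (rad (a * b * c).natAbs : ℝ) ^ (1 + ε)

set_option linter.unusedVariables false
set_option maxHeartbeats 1000000

lemma rad_pos (n : ℕ) : 0 < rad n :=
  Finset.prod_pos (fun p hp => (Nat.prime_of_mem_primeFactors hp).pos)

lemma rad_le_self (n : ℕ) (hn : n ≠ 0) : rad n ≤ n :=
  Nat.le_of_dvd (Nat.pos_of_ne_zero hn) (Nat.prod_primeFactors_dvd n)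

lemma rad_le_of_dvd (d n : ℕ) (h : d ∣ n) (hn : n ≠ 0) : rad d ≤ rad n :=
  Finset.prod_le_prod_of_subset_of_one_le' (Nat.primeFactors_mono h hn)
    (fun p hp _ => (Nat.prime_of_mem_primeFactors hp).one_lt.le)

lemma rad_mul_le (m n : ℕ) : rad (m * n) ≤ rad m * rad n := by
  rcases eq_or_ne m 0 with rfl | hm
  · have := rad_pos n; simp only [rad, zero_mul, Nat.primeFactors_zero,
      Finset.prod_empty, one_mul] at *; omega
  rcases eq_or_ne n 0 with rfl | hn
  · have := rad_pos m; simp only [rad, mul_zero, Nat.primeFactors_zero,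
      Finset.prod_empty, mul_one] at *; omega
  · unfold rad
    rw [Nat.primeFactors_mul hm hn, ← Finset.union_sdiff_self_eq_union,
      Finset.prod_union Finset.disjoint_sdiff]
    exact Nat.mul_le_mul_left _ (Finset.prod_le_prod_of_subset_of_one_le'
      (Finset.sdiff_subset) (fun p hp _ => (Nat.prime_of_mem_primeFactors hp).one_lt.le))

lemma rad_pow (n k : ℕ) (hk : k ≠ 0) : rad (n ^ k) = rad n := by
  unfold rad; rw [Nat.primeFactors_pow n hk]

lemma rad_five : rad 5 = 5 := by
  unfold rad; rw [Nat.Prime.primeFactors (by norm_num)]; simp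

lemma step_A (habc : ABCConjecture) (ε : ℝ) (hε : 0 < ε) (hε2 : ε ≤ 1/2) :
    ∃ C' : ℝ, 0 < C' ∧ ∀ X : ℝ, 4 ≤ X → ∀ x u : ℤ, 1 ≤ x →
      1 ≤ |5 * x ^ 22 - u ^ 2| → ((|5 * x ^ 22 - u ^ 2| : ℤ) : ℝ) ≤ 4 * X →
      (x : ℝ) ≤ C' * X ^ ((2 + ε) / (10 - 12 * ε)) := by
  obtain ⟨C, hC, H⟩ := habc ε hε
  set d : ℝ := 10 - 12 * ε with hd
  have hd4 : 4 ≤ d := by rw [hd]; linarith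
  have hd0 : 0 < d := by linarith
  set K : ℝ := (4/5) * C * 60 ^ (1+ε) with hKdef
  have hK : 0 < K := by
    have : (0:ℝ) < 60 ^ (1+ε) := Real.rpow_pos_of_pos (by norm_num) _
    positivity
  refine ⟨max 1 (K ^ (1/d)), lt_of_lt_of_le one_pos (le_max_left _ _), ?_⟩
  intro X hX x u hx h1 h2
  have hX0 : (0:ℝ) < X := by linarith
  have hX1 : (1:ℝ) ≤ X := by linarith
  have hxr1 : (1:ℝ) ≤ (x:ℝ) := by exact_mod_cast hx
  have hxr0 : (0:ℝ) < (x:ℝ) := by linarith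
  have hexp : (1:ℝ)/22 ≤ (2+ε)/d := by
    rw [div_le_div_iff₀ (by norm_num) hd0]; nlinarith
  by_cases hcase : ((x:ℝ))^(22:ℕ) ≤ X
  · have hstep : (x:ℝ) ≤ X ^ ((1:ℝ)/22) := by
      have e1 : (x:ℝ) = (((x:ℝ))^(22:ℕ)) ^ ((1:ℝ)/22) := by
        rw [← Real.rpow_natCast (x:ℝ) 22, ← Real.rpow_mul hxr0.le]
        norm_num
      rw [e1]
      exact Real.rpow_le_rpow (by positivity) hcase (by norm_num)
    calc (x:ℝ) ≤ X ^ ((1:ℝ)/22) := hstep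
      _ ≤ X ^ ((2+ε)/d) := Real.rpow_le_rpow_of_exponent_le hX1 hexp
      _ ≤ max 1 (K ^ (1/d)) * X ^ ((2+ε)/d) :=
          le_mul_of_one_le_left (by positivity) (le_max_left _ _)
  · push_neg at hcase
    set c0 : ℤ := 5 * x ^ 22 - u ^ 2 with hc0
    have hc0ne : c0 ≠ 0 := by
      intro h; rw [h] at h1; simp at h1
    have hc0abs : ((c0.natAbs : ℕ) : ℝ) ≤ 4 * X := by
      have := h2
      rwa [Int.abs_eq_natAbs, Int.cast_natCast] at this
    have hune : u ≠ 0 := by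
      intro h
      rw [h] at hc0
      have : (c0:ℝ) = 5 * (x:ℝ)^22 := by rw [hc0]; push_cast; ring
      have h5 : ((c0.natAbs : ℕ) : ℝ) = |(c0 : ℝ)| := by
        rw [Nat.cast_natAbs]; push_cast; ring_nf
      rw [h5, this, abs_of_pos (by positivity)] at hc0abs
      nlinarith
    -- gcd setup
    set g : ℕ := Int.gcd (5 * x ^ 22) (u ^ 2) with hgdef
    have hAne : (5 * x ^ 22 : ℤ) ≠ 0 := by positivity
    have hgpos : 0 < g := Int.gcd_pos_of_ne_zero_left _ hAne
    obtain ⟨a, ha⟩ : ((g:ℤ)) ∣ 5 * x ^ 22 := Int.gcd_dvd_left _ _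
    obtain ⟨b, hb⟩ : ((g:ℤ)) ∣ u ^ 2 := Int.gcd_dvd_right _ _
    have hgne : (g:ℤ) ≠ 0 := by exact_mod_cast hgpos.ne'
    have hane : a ≠ 0 := by rintro rfl; simp at ha; omega
    have hbne : b ≠ 0 := by
      rintro rfl; simp at hb; exact hune hb
    have hco : IsCoprime a b := by
      rw [Int.isCoprime_iff_gcd_eq_one]
      have h6 : Int.gcd ((g:ℤ)*a) ((g:ℤ)*b) = g := by rw [← ha, ← hb]
      rw [Int.gcd_mul_left] at h6
      simp only [Int.natAbs_natCast] at h6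
      exact Nat.eq_of_mul_eq_mul_left hgpos (h6.trans (mul_one g).symm)
    set c : ℤ := a - b with hcdefn
    have hcc : c0 = (g:ℤ) * c := by rw [hc0, ha, hb, hcdefn, mul_sub]
    have hcne : c ≠ 0 := by rintro h; rw [h, mul_zero] at hcc; exact hc0ne hcc
    have hcop2 : IsCoprime c b := by
      have := IsCoprime.add_mul_left_left hco (-1)
      simpa [hcdefn, mul_comm, sub_eq_add_neg] using this
    have heq : c + b = a := by rw [hcdefn]; ring
    have key := H c b a hcne hbne hane hcop2 heq
    -- radical bounds
    have hxabs_ne : x.natAbs ≠ 0 := by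
      simp [Int.natAbs_eq_zero]; omega
    have r1 : rad a.natAbs ≤ 5 * x.natAbs := by
      have hdvd : a.natAbs ∣ 5 * x.natAbs ^ 22 := by
        have h7 : a ∣ 5 * x ^ 22 := Dvd.intro_left _ ha.symm
        have h8 := Int.natAbs_dvd_natAbs.mpr h7
        simpa [Int.natAbs_mul, Int.natAbs_pow] using h8
      calc rad a.natAbs ≤ rad (5 * x.natAbs ^ 22) :=
            rad_le_of_dvd _ _ hdvd (by positivity)
        _ ≤ rad 5 * rad (x.natAbs ^ 22) := rad_mul_le _ _
        _ = 5 * rad x.natAbs := by rw [rad_pow _ _ (by norm_num), rad_five]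
        _ ≤ 5 * x.natAbs := Nat.mul_le_mul_left _ (rad_le_self _ hxabs_ne)
    have r2 : rad b.natAbs ≤ u.natAbs := by
      have hdvd : b.natAbs ∣ u.natAbs ^ 2 := by
        have h7 : b ∣ u ^ 2 := Dvd.intro_left _ hb.symm
        have h8 := Int.natAbs_dvd_natAbs.mpr h7
        simpa [Int.natAbs_pow] using h8
      calc rad b.natAbs ≤ rad (u.natAbs ^ 2) :=
            rad_le_of_dvd _ _ hdvd (by simpa [Int.natAbs_eq_zero] using hune)
        _ = rad u.natAbs := rad_pow _ _ (by norm_num)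
        _ ≤ u.natAbs := rad_le_self _ (by simpa [Int.natAbs_eq_zero] using hune)
    have r3 : rad c.natAbs ≤ c0.natAbs := by
      have hdvd : c.natAbs ∣ c0.natAbs :=
        Int.natAbs_dvd_natAbs.mpr (Dvd.intro_left _ hcc.symm)
      calc rad c.natAbs ≤ c.natAbs :=
            rad_le_self _ (by simpa [Int.natAbs_eq_zero] using hcne)
        _ ≤ c0.natAbs := Nat.le_of_dvd (by simpa [Int.natAbs_pos] using hc0ne) hdvd
    have rtot : rad ((c * b * a).natAbs) ≤ c0.natAbs * u.natAbs * (5 * x.natAbs) := by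
      have hprod : (c * b * a).natAbs = c.natAbs * b.natAbs * a.natAbs := by
        simp [Int.natAbs_mul]
      rw [hprod]
      calc rad (c.natAbs * b.natAbs * a.natAbs)
          ≤ rad (c.natAbs * b.natAbs) * rad a.natAbs := rad_mul_le _ _
        _ ≤ rad c.natAbs * rad b.natAbs * rad a.natAbs :=
            Nat.mul_le_mul_right _ (rad_mul_le _ _)
        _ ≤ c0.natAbs * u.natAbs * (5 * x.natAbs) :=
            Nat.mul_le_mul (Nat.mul_le_mul r3 r2) r1
    -- real bounds
    have hcastx : ((x.natAbs : ℕ) : ℝ) = (x:ℝ) := by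
      rw [Nat.cast_natAbs]; push_cast; exact abs_of_pos hxr0
    have hc0R : -(4*X) ≤ (c0:ℝ) ∧ (c0:ℝ) ≤ 4*X := by
      have h5 : ((c0.natAbs : ℕ) : ℝ) = |(c0 : ℝ)| := by
        rw [Nat.cast_natAbs]; push_cast; ring_nf
      rw [h5] at hc0abs
      constructor <;> [exact neg_le_of_abs_le hc0abs; exact le_of_abs_le hc0abs]
    have huabs : ((u.natAbs : ℕ) : ℝ) ≤ 3 * (x:ℝ)^11 := by
      have hsq : ((u:ℝ))^2 ≤ (3 * (x:ℝ)^11)^2 := by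
        have h5 : (u:ℝ)^2 = 5 * (x:ℝ)^22 - (c0:ℝ) := by
          rw [hc0]; push_cast; ring
        nlinarith [hc0R.1, hcase, hX0, pow_pos hxr0 22]
      have := abs_le.mpr (abs_le_of_sq_le_sq' hsq (by positivity))
      rw [Nat.cast_natAbs]; push_cast; exact this
    have hradR : ((rad ((c * b * a).natAbs) : ℕ) : ℝ) ≤ 60 * (x:ℝ)^12 * X := by
      have h9 : ((rad ((c * b * a).natAbs) : ℕ) : ℝ)
          ≤ ((c0.natAbs : ℕ):ℝ) * ((u.natAbs : ℕ):ℝ) * (5 * ((x.natAbs : ℕ):ℝ)) := by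
        exact_mod_cast Nat.cast_le.mpr rtot
      have hx11 : (0:ℝ) ≤ 3 * (x:ℝ)^11 := by positivity
      calc ((rad ((c * b * a).natAbs) : ℕ) : ℝ)
          ≤ ((c0.natAbs : ℕ):ℝ) * ((u.natAbs : ℕ):ℝ) * (5 * ((x.natAbs : ℕ):ℝ)) := h9
        _ ≤ (4*X) * (3*(x:ℝ)^11) * (5*(x:ℝ)) := by
            rw [hcastx]
            apply mul_le_mul
            · exact mul_le_mul hc0abs huabs (by positivity) (by positivity)
            · linarith
            · positivity
            · positivity
        _ = 60 * (x:ℝ)^12 * X := by ring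
    -- g bound
    have hgle : ((g:ℕ):ℝ) ≤ 4 * X := by
      have hgc0 : (g:ℤ) ∣ c0 := ⟨c, hcc⟩
      have h' : (g:ℤ) ≤ |c0| := Int.le_of_dvd (abs_pos.mpr hc0ne) ((dvd_abs _ _).mpr hgc0)
      have h'' : ((g:ℕ):ℝ) ≤ ((|c0|:ℤ):ℝ) := by exact_mod_cast h'
      exact h''.trans h2
    -- combine via abc
    have key2 : ((|a|:ℤ):ℝ) ≤ C * (60 * (x:ℝ)^12 * X) ^ (1+ε) := by
      refine key.trans (mul_le_mul_of_nonneg_left ?_ hC.le)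
      exact Real.rpow_le_rpow (by positivity) hradR (by linarith)
    have habsa : 5 * (x:ℝ)^22 = ((g:ℕ):ℝ) * ((|a|:ℤ):ℝ) := by
      have h5 : |5 * x^22| = (g:ℤ) * |a| := by
        rw [ha, abs_mul, abs_of_nonneg (by positivity : (0:ℤ) ≤ (g:ℤ))]
      have h6 : |5 * x^22| = 5 * x^22 := abs_of_pos (by positivity)
      rw [h6] at h5
      exact_mod_cast congrArg (fun z : ℤ => (z : ℝ)) h5
    have main : 5 * (x:ℝ)^22 ≤ 4*X * (C * (60 * (x:ℝ)^12 * X) ^ (1+ε)) := by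
      rw [habsa]
      have habs_a_nonneg : (0:ℝ) ≤ ((|a|:ℤ):ℝ) := by positivity
      exact mul_le_mul hgle key2 habs_a_nonneg (by linarith)
    -- rpow algebra
    set xr := (x:ℝ) with hxrdef
    have expand : (60 * xr^12 * X) ^ (1+ε) = 60^(1+ε) * xr^(12*(1+ε)) * X^(1+ε) := by
      rw [Real.mul_rpow (by positivity) (by positivity),
          Real.mul_rpow (by positivity) (by positivity),
          ← Real.rpow_natCast xr 12, ← Real.rpow_mul hxr0.le]
      norm_num
    have split22 : xr ^ (22:ℕ) = xr^(12*(1+ε)) * xr^d := by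
      rw [← Real.rpow_natCast xr 22, ← Real.rpow_add hxr0]
      norm_num [hd]; ring_nf; norm_cast
    have hXcomb : X * X^(1+ε) = X^(2+ε) := by
      nth_rewrite 1 [← Real.rpow_one X]
      rw [← Real.rpow_add hX0, show (1:ℝ)+(1+ε) = 2+ε by ring]
    have hP0 : (0:ℝ) < xr^(12*(1+ε)) := Real.rpow_pos_of_pos hxr0 _
    have main2 : xr ^ d ≤ K * X^(2+ε) := by
      rw [← mul_le_mul_iff_right₀ hP0]
      have expand2 : 4*X * (C * (60 * xr^12 * X) ^ (1+ε))
          = (xr^(12*(1+ε))) * ((4 * C * 60^(1+ε)) * X^(2+ε)) := by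
        rw [expand, ← hXcomb]; ring
      rw [expand2] at main
      rw [split22] at main
      have : xr^(12*(1+ε)) * (K * X^(2+ε))
          = (xr^(12*(1+ε))) * (((4/5) * C * 60^(1+ε)) * X^(2+ε)) := by rw [hKdef]
      rw [this]
      nlinarith [main, hP0]
    have final : xr ≤ K^(1/d) * X^((2+ε)/d) := by
      have e1 : xr = (xr ^ d) ^ (1/d) := by
        rw [← Real.rpow_mul hxr0.le, mul_one_div, div_self hd0.ne', Real.rpow_one]
      have e2 : (K * X^(2+ε)) ^ (1/d) = K^(1/d) * X^((2+ε)/d) := by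
        rw [Real.mul_rpow hK.le (by positivity), ← Real.rpow_mul hX0.le, mul_one_div]
      calc xr = (xr ^ d) ^ (1/d) := e1
        _ ≤ (K * X^(2+ε)) ^ (1/d) :=
            Real.rpow_le_rpow (by positivity) main2 (by positivity)
        _ = K^(1/d) * X^((2+ε)/d) := e2
    calc xr ≤ K^(1/d) * X^((2+ε)/d) := final
      _ ≤ max 1 (K^(1/d)) * X^((2+ε)/d) :=
          mul_le_mul_of_nonneg_right (le_max_right _ _) (by positivity)

noncomputable def Ufin (X : ℝ) (x : ℤ) : Finset ℤ :=
  Finset.Icc ⌈Real.sqrt (5*(x:ℝ)^22 - 4*X)⌉ ⌊Real.sqrt (5*(x:ℝ)^22 + 4*X)⌋ ∪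
  Finset.Icc (-⌊Real.sqrt (5*(x:ℝ)^22 + 4*X)⌋) (-⌈Real.sqrt (5*(x:ℝ)^22 - 4*X)⌉)

lemma mem_Ufin (X : ℝ) (x u : ℤ) (h2 : ((|5*x^22 - u^2| : ℤ) : ℝ) ≤ 4*X) :
    u ∈ Ufin X x := by
  have habs : |5*(x:ℝ)^22 - (u:ℝ)^2| ≤ 4*X := by push_cast at h2 ⊢; exact h2
  obtain ⟨hlo, hhi⟩ := abs_le.mp habs
  have h1 : 5*(x:ℝ)^22 - 4*X ≤ (u:ℝ)^2 := by linarith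
  have h2' : (u:ℝ)^2 ≤ 5*(x:ℝ)^22 + 4*X := by linarith
  have hs1 : Real.sqrt (5*(x:ℝ)^22 - 4*X) ≤ |(u:ℝ)| := by
    calc Real.sqrt (5*(x:ℝ)^22 - 4*X) ≤ Real.sqrt ((u:ℝ)^2) := Real.sqrt_le_sqrt h1
      _ = |(u:ℝ)| := Real.sqrt_sq_eq_abs _
  have hs2 : |(u:ℝ)| ≤ Real.sqrt (5*(x:ℝ)^22 + 4*X) :=
    Real.le_sqrt_of_sq_le (by rwa [sq_abs])
  rcases le_or_gt 0 u with hu | hu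
  · apply Finset.mem_union_left
    rw [Finset.mem_Icc]
    have hru : |(u:ℝ)| = (u:ℝ) := abs_of_nonneg (by exact_mod_cast hu)
    rw [hru] at hs1 hs2
    exact ⟨Int.ceil_le.mpr hs1, Int.le_floor.mpr hs2⟩
  · apply Finset.mem_union_right
    rw [Finset.mem_Icc]
    have hru : |(u:ℝ)| = -(u:ℝ) := abs_of_neg (by exact_mod_cast hu)
    rw [hru] at hs1 hs2
    constructor
    · rw [neg_le, Int.le_floor]; push_cast; linarith
    · rw [le_neg, Int.ceil_le]; push_cast; linarith

lemma card_Icc_le (l m : ℤ) (s1 s2 : ℝ) (hs : s1 ≤ s2) (h1 : s1 ≤ (l:ℝ)) (h2 : (m:ℝ) ≤ s2) :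
    ((Finset.Icc l m).card : ℝ) ≤ s2 - s1 + 1 := by
  rcases le_or_gt l m with h | h
  · rw [Int.card_Icc]
    have hcast : (((m + 1 - l).toNat : ℕ) : ℝ) = ((m:ℝ) + 1 - (l:ℝ)) := by
      have h9 : ((m + 1 - l).toNat : ℤ) = m + 1 - l := Int.toNat_of_nonneg (by omega)
      have := congrArg (fun z : ℤ => (z : ℝ)) h9
      push_cast at this ⊢
      ring_nf at this ⊢
      linarith [this]
    rw [hcast]
    have hl : s1 ≤ (l:ℝ) := h1
    linarith
  · rw [Finset.Icc_eq_empty (by omega)]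
    simp only [Finset.card_empty, Nat.cast_zero]
    linarith

lemma card_Ufin (X : ℝ) (hX : 0 ≤ X) (x : ℤ) (G : ℝ)
    (hgap : Real.sqrt (5*(x:ℝ)^22 + 4*X) ≤ Real.sqrt (5*(x:ℝ)^22 - 4*X) + G) :
    ((Ufin X x).card : ℝ) ≤ 2*G + 2 := by
  set s1 := Real.sqrt (5*(x:ℝ)^22 - 4*X) with hs1d
  set s2 := Real.sqrt (5*(x:ℝ)^22 + 4*X) with hs2d
  have hs : s1 ≤ s2 := Real.sqrt_le_sqrt (by linarith)
  have c1 : ((Finset.Icc ⌈s1⌉ ⌊s2⌋).card : ℝ) ≤ s2 - s1 + 1 :=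
    card_Icc_le _ _ s1 s2 hs (Int.le_ceil s1) (Int.floor_le s2)
  have c2 : ((Finset.Icc (-⌊s2⌋) (-⌈s1⌉)).card : ℝ) ≤ s2 - s1 + 1 := by
    have := card_Icc_le (-⌊s2⌋) (-⌈s1⌉) (-s2) (-s1) (by linarith)
      (by push_cast; linarith [Int.floor_le s2]) (by push_cast; linarith [Int.le_ceil s1])
    linarith
  have hsplit0 : (Ufin X x).card
      ≤ (Finset.Icc ⌈s1⌉ ⌊s2⌋).card + (Finset.Icc (-⌊s2⌋) (-⌈s1⌉)).card :=
    Finset.card_union_le _ _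
  have hsplit : ((Ufin X x).card : ℝ)
      ≤ ((Finset.Icc ⌈s1⌉ ⌊s2⌋).card : ℝ) + ((Finset.Icc (-⌊s2⌋) (-⌈s1⌉)).card : ℝ) := by
    exact_mod_cast Nat.cast_le.mpr hsplit0
  have hgap' : s2 - s1 ≤ G := by linarith
  linarith

lemma gap_small (X : ℝ) (hX : 4 ≤ X) (x : ℤ) :
    Real.sqrt (5*(x:ℝ)^22 + 4*X) ≤ Real.sqrt (5*(x:ℝ)^22 - 4*X) + 3 * Real.sqrt X := by
  have hA : (0:ℝ) ≤ 5*(x:ℝ)^22 := by positivity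
  have hXs : Real.sqrt X ^ 2 = X := Real.sq_sqrt (by linarith)
  rw [Real.sqrt_le_iff]
  constructor
  · positivity
  · rcases le_or_gt 0 (5*(x:ℝ)^22 - 4*X) with h | h
    · have hsq := Real.sq_sqrt h
      nlinarith [Real.sqrt_nonneg (5*(x:ℝ)^22 - 4*X), Real.sqrt_nonneg X]
    · have h0 : Real.sqrt (5*(x:ℝ)^22 - 4*X) = 0 := Real.sqrt_eq_zero_of_nonpos h.le
      rw [h0]
      nlinarith [Real.sqrt_nonneg X]

lemma gap_tail (X : ℝ) (hX : 4 ≤ X) (x : ℤ) (hx : 1 ≤ x) (hXx : X ≤ (x:ℝ)^22) :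
    Real.sqrt (5*(x:ℝ)^22 + 4*X) ≤ Real.sqrt (5*(x:ℝ)^22 - 4*X) + 4*X/(x:ℝ)^11 := by
  have hxr : (1:ℝ) ≤ (x:ℝ) := by exact_mod_cast hx
  have hx11 : (0:ℝ) < (x:ℝ)^11 := by positivity
  have hAX : (0:ℝ) ≤ 5*(x:ℝ)^22 - 4*X := by nlinarith
  have hs1 : (x:ℝ)^11 ≤ Real.sqrt (5*(x:ℝ)^22 - 4*X) := by
    rw [Real.le_sqrt (by positivity) hAX]
    have : ((x:ℝ)^11)^2 = (x:ℝ)^22 := by ring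
    rw [this]; nlinarith
  have ht0 : (0:ℝ) < 4*X/(x:ℝ)^11 := by positivity
  rw [Real.sqrt_le_iff]
  refine ⟨by positivity, ?_⟩
  have hsq := Real.sq_sqrt hAX
  have ht : (x:ℝ)^11 * (4*X/(x:ℝ)^11) = 4*X := by field_simp
  have hst : 4*X ≤ Real.sqrt (5*(x:ℝ)^22 - 4*X) * (4*X/(x:ℝ)^11) := by
    calc 4*X = (x:ℝ)^11 * (4*X/(x:ℝ)^11) := ht.symm
      _ ≤ Real.sqrt (5*(x:ℝ)^22 - 4*X) * (4*X/(x:ℝ)^11) :=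
          mul_le_mul_of_nonneg_right hs1 ht0.le
  nlinarith [Real.sqrt_nonneg (5*(x:ℝ)^22 - 4*X), sq_nonneg (4*X/(x:ℝ)^11)]

lemma key_ineq (p : ℝ) (hp : 1 ≤ p) : 1/(p+1)^11 ≤ 1/10 * (1/p^10 - 1/(p+1)^10) := by
  have hp0 : (0:ℝ) < p := by linarith
  have hq0 : (0:ℝ) < p + 1 := by linarith
  have hber : 1 + (11:ℕ)*(1/p) ≤ (1+1/p)^(11:ℕ) :=
    one_add_mul_le_pow (le_trans (by norm_num : (-2:ℝ) ≤ 0) (by positivity : (0:ℝ) ≤ 1/p)) 11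
  have hq : p^11 + 11*p^10 ≤ (p+1)^11 := by
    have hmul := mul_le_mul_of_nonneg_left hber (le_of_lt (pow_pos hp0 11))
    have e1 : (p:ℝ)^11 * (1 + (11:ℕ)*(1/p)) = p^11 + 11*p^10 := by
      push_cast; field_simp
    have e2 : (p:ℝ)^11 * (1+1/p)^(11:ℕ) = (p+1)^11 := by
      rw [← mul_pow]; congr 1; field_simp
    rw [e1, e2] at hmul; exact hmul
  have goal1 : 10*p^10 ≤ (p+1)*((p+1)^10 - p^10) := by nlinarith [hq]
  have key2 : 10*(p^10*(p+1)^10) ≤ ((p+1)^10 - p^10)*(p+1)^11 := by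
    nlinarith [mul_le_mul_of_nonneg_right goal1 (le_of_lt (pow_pos hq0 10))]
  have e3 : (1:ℝ)/10 * (1/p^10 - 1/(p+1)^10) = ((p+1)^10 - p^10)/(10*(p^10*(p+1)^10)) := by
    rw [div_sub_div _ _ (by positivity) (by positivity), div_mul_div_comm]
    ring_nf
  rw [e3, div_le_div_iff₀ (by positivity) (by positivity)]
  nlinarith [key2]

lemma tail_sum_aux (n : ℕ) (hn : 1 ≤ n) (m : ℕ) :
    (∑ x ∈ Finset.Ioc n m, (1:ℝ)/(x:ℝ)^11) + 1/10 * (1/((max n m : ℕ):ℝ)^10)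
      ≤ 1/10 * (1/(n:ℝ)^10) := by
  induction m with
  | zero =>
      rw [Finset.Ioc_eq_empty (by omega), max_eq_left (by omega)]
      simp
  | succ m ih =>
      rcases le_or_gt (m+1) n with h | h
      · rw [Finset.Ioc_eq_empty (by omega), max_eq_left (by omega)]
        simp
      · have hnm : n ≤ m := by omega
        rw [Finset.sum_Ioc_succ_top hnm]
        rw [max_eq_right (by omega : n ≤ m + 1)]
        rw [max_eq_right hnm] at ih
        have hm1 : (1:ℝ) ≤ (m:ℝ) := by exact_mod_cast le_trans hn hnm
        have hkey := key_ineq (m:ℝ) hm1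
        push_cast at ih hkey ⊢
        linarith

lemma tail_sum (n : ℕ) (hn : 1 ≤ n) (m : ℕ) :
    ∑ x ∈ Finset.Ioc n m, (1:ℝ)/(x:ℝ)^11 ≤ 1/10 * (1/(n:ℝ)^10) := by
  have h := tail_sum_aux n hn m
  have hpos : (0:ℝ) ≤ 1/10 * (1/((max n m : ℕ):ℝ)^10) := by
    have : (0:ℝ) < ((max n m : ℕ):ℝ) := by
      have : 1 ≤ max n m := le_trans hn (le_max_left _ _)
      exact_mod_cast Nat.lt_of_lt_of_le Nat.zero_lt_one this
    positivity
  linarith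

theorem abc_implies_N4_bound (habc : ABCConjecture) :
    ∀ η : ℝ, 0 < η → ∃ C : ℝ, 0 < C ∧ ∀ X : ℝ, 4 ≤ X →
      (Set.ncard {p : ℤ × ℤ | 1 ≤ p.1 ∧
          1 ≤ |5 * p.1 ^ 22 - p.2 ^ 2| ∧ ((|5 * p.1 ^ 22 - p.2 ^ 2| : ℤ) : ℝ) ≤ 4 * X} : ℝ)
        ≤ C * (X ^ ((6 : ℝ) / 11) + X ^ ((1 : ℝ) / 5 + η)) := by
  intro η hη
  set ε := η / (1 + 4*η) with hεdef
  have hε : 0 < ε := div_pos hη (by linarith)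
  have hε2 : ε ≤ 1/2 := by
    rw [hεdef, div_le_iff₀ (by linarith)]; linarith
  obtain ⟨C', hC', hA⟩ := step_A habc ε hε hε2
  have h50 : ε * (17 + 60*η) ≤ 50 * η := by
    rw [hεdef, div_mul_eq_mul_div, div_le_iff₀ (by linarith)]
    nlinarith
  have hexple : (2+ε)/(10-12*ε) ≤ 1/5 + η := by
    rw [div_le_iff₀ (by linarith : (0:ℝ) < 10 - 12*ε)]
    nlinarith
  refine ⟨2048 + 2*C', by linarith, ?_⟩
  intro X hX
  have hX0 : (0:ℝ) < X := by linarith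
  have hX1 : (1:ℝ) ≤ X := by linarith
  have hxb : ∀ x u : ℤ, 1 ≤ x → 1 ≤ |5*x^22 - u^2| →
      ((|5*x^22-u^2| : ℤ):ℝ) ≤ 4*X → (x:ℝ) ≤ C' * X ^ ((1:ℝ)/5 + η) :=
    fun x u h1 h2 h3 => (hA X hX x u h1 h2 h3).trans
      (mul_le_mul_of_nonneg_left (Real.rpow_le_rpow_of_exponent_le hX1 hexple) hC'.le)
  set B := ⌊C' * X ^ ((1:ℝ)/5 + η)⌋₊ with hBdef
  set T0 := ⌊X ^ ((1:ℝ)/22)⌋₊ with hT0def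
  have hX22 : (1:ℝ) ≤ X ^ ((1:ℝ)/22) := Real.one_le_rpow hX1 (by norm_num)
  have hT0ge1 : 1 ≤ T0 := Nat.le_floor (by exact_mod_cast hX22)
  set TF : Finset (ℤ × ℤ) :=
    (Finset.Icc 1 B).biUnion (fun n => {((n:ℤ))} ×ˢ Ufin X (n:ℤ)) with hTFdef
  have hsub : {p : ℤ × ℤ | 1 ≤ p.1 ∧
      1 ≤ |5 * p.1 ^ 22 - p.2 ^ 2| ∧ ((|5 * p.1 ^ 22 - p.2 ^ 2| : ℤ) : ℝ) ≤ 4 * X}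
      ⊆ ↑TF := by
    rintro ⟨x, u⟩ ⟨h1, h2, h3⟩
    simp only [Set.mem_setOf_eq] at h1 h2 h3
    have hxx : ((x.toNat : ℕ) : ℤ) = x := Int.toNat_of_nonneg (by omega)
    have hmem : (x, u) ∈ TF := by
      rw [hTFdef, Finset.mem_biUnion]
      refine ⟨x.toNat, ?_, ?_⟩
      · rw [Finset.mem_Icc]
        constructor
        · omega
        · apply Nat.le_floor
          have hxr := hxb x u h1 h2 h3
          have : ((x.toNat : ℕ) : ℝ) = (x:ℝ) := by exact_mod_cast congrArg (fun z : ℤ => (z:ℝ)) hxx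
          rw [this]; exact hxr
      · rw [Finset.mem_product]
        constructor
        · simp [hxx]
        · simp only [hxx]; exact mem_Ufin X x u h3
    exact hmem
  have hcount : (Set.ncard {p : ℤ × ℤ | 1 ≤ p.1 ∧
      1 ≤ |5 * p.1 ^ 22 - p.2 ^ 2| ∧ ((|5 * p.1 ^ 22 - p.2 ^ 2| : ℤ) : ℝ) ≤ 4 * X} : ℝ)
      ≤ (TF.card : ℝ) := by
    have := Set.ncard_le_ncard hsub (Finset.finite_toSet TF)
    rw [Set.ncard_coe_finset] at this
    exact_mod_cast this
  have hTFle : (TF.card : ℝ) ≤ ∑ n ∈ Finset.Icc 1 B, ((Ufin X (n:ℤ)).card : ℝ) := by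
    calc (TF.card : ℝ)
        ≤ ((∑ n ∈ Finset.Icc 1 B, ({((n:ℤ))} ×ˢ Ufin X (n:ℤ)).card : ℕ) : ℝ) := by
          exact_mod_cast Nat.cast_le.mpr (Finset.card_biUnion_le)
      _ = ∑ n ∈ Finset.Icc 1 B, ((Ufin X (n:ℤ)).card : ℝ) := by
          push_cast
          refine Finset.sum_congr rfl (fun n _ => ?_)
          rw [Finset.singleton_product, Finset.card_map]
  -- head bound
  have hsqX2 : (2:ℝ) ≤ Real.sqrt X := by
    rw [show (2:ℝ) = Real.sqrt 4 by rw [show (4:ℝ) = 2^2 by norm_num, Real.sqrt_sq (by norm_num)]]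
    exact Real.sqrt_le_sqrt hX
  have hsqX0 : (0:ℝ) ≤ Real.sqrt X := Real.sqrt_nonneg X
  have hhead : ∀ n : ℕ, ((Ufin X (n:ℤ)).card : ℝ) ≤ 7 * Real.sqrt X := by
    intro n
    have := card_Ufin X (by linarith) (n:ℤ) (3 * Real.sqrt X) (gap_small X hX (n:ℤ))
    linarith
  -- head sums
  have hheadsum : ∀ M : ℕ, M ≤ T0 →
      ∑ n ∈ Finset.Icc 1 M, ((Ufin X (n:ℤ)).card : ℝ) ≤ 7 * X ^ ((6:ℝ)/11) := by
    intro M hM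
    have hs : ∑ n ∈ Finset.Icc 1 M, ((Ufin X (n:ℤ)).card : ℝ)
        ≤ (Finset.Icc 1 M).card • (7 * Real.sqrt X) :=
      Finset.sum_le_card_nsmul _ _ _ (fun n _ => hhead n)
    rw [Nat.card_Icc, nsmul_eq_mul] at hs
    have hcard : ((M + 1 - 1 : ℕ) : ℝ) ≤ (T0 : ℝ) := by
      have : M + 1 - 1 ≤ T0 := by omega
      exact_mod_cast this
    have hT0le : (T0 : ℝ) ≤ X ^ ((1:ℝ)/22) := Nat.floor_le (by positivity)
    have hfin : (X ^ ((1:ℝ)/22)) * (7 * Real.sqrt X) = 7 * X ^ ((6:ℝ)/11) := by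
      rw [Real.sqrt_eq_rpow, ← mul_assoc, mul_comm (X ^ ((1:ℝ)/22)) 7, mul_assoc,
        ← Real.rpow_add hX0]
      norm_num
    calc ∑ n ∈ Finset.Icc 1 M, ((Ufin X (n:ℤ)).card : ℝ)
        ≤ ((M + 1 - 1 : ℕ) : ℝ) * (7 * Real.sqrt X) := hs
      _ ≤ (X ^ ((1:ℝ)/22)) * (7 * Real.sqrt X) := by
          apply mul_le_mul_of_nonneg_right (hcard.trans hT0le) (by positivity)
      _ = 7 * X ^ ((6:ℝ)/11) := hfin
  have hBle : (B : ℝ) ≤ C' * X ^ ((1:ℝ)/5 + η) := Nat.floor_le (by positivity)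
  have hXe0 : (0:ℝ) ≤ X ^ ((1:ℝ)/5 + η) := by positivity
  have hX611 : (0:ℝ) ≤ X ^ ((6:ℝ)/11) := by positivity
  rcases le_total B T0 with hBT | hTB
  · -- everything is "head"
    have := hheadsum B hBT
    calc (Set.ncard _ : ℝ) ≤ (TF.card : ℝ) := hcount
      _ ≤ ∑ n ∈ Finset.Icc 1 B, ((Ufin X (n:ℤ)).card : ℝ) := hTFle
      _ ≤ 7 * X ^ ((6:ℝ)/11) := this
      _ ≤ (2048 + 2*C') * (X ^ ((6:ℝ)/11) + X ^ ((1:ℝ)/5 + η)) := by nlinarith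
  · -- split head/tail
    have hsplit : Finset.Icc 1 B = Finset.Icc 1 T0 ∪ Finset.Ioc T0 B := by
      ext a
      simp only [Finset.mem_Icc, Finset.mem_union, Finset.mem_Ioc]
      omega
    have hdisj : Disjoint (Finset.Icc 1 T0) (Finset.Ioc T0 B) := by
      rw [Finset.disjoint_left]
      intro a ha hb
      rw [Finset.mem_Icc] at ha
      rw [Finset.mem_Ioc] at hb
      omega
    rw [hsplit, Finset.sum_union hdisj] at hTFle
    -- tail per-term bound
    have htailterm : ∀ n ∈ Finset.Ioc T0 B,
        ((Ufin X (n:ℤ)).card : ℝ) ≤ 2 + 8*X/((n:ℝ))^11 := by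
      intro n hn
      rw [Finset.mem_Ioc] at hn
      have hn1 : 1 ≤ n := by omega
      have hnr1 : (1:ℝ) ≤ (n:ℝ) := by exact_mod_cast hn1
      have hfl : X ^ ((1:ℝ)/22) < (n:ℝ) := by
        have := Nat.lt_of_floor_lt hn.1
        exact this
      have hXn : X ≤ ((n:ℤ):ℝ)^22 := by
        have hXeq : (X ^ ((1:ℝ)/22))^(22:ℕ) = X := by
          rw [← Real.rpow_natCast (X ^ ((1:ℝ)/22)) 22, ← Real.rpow_mul hX0.le]
          norm_num
        have : (X ^ ((1:ℝ)/22))^(22:ℕ) ≤ (n:ℝ)^(22:ℕ) :=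
          pow_le_pow_left₀ (by positivity) hfl.le 22
        rw [hXeq] at this
        exact_mod_cast this
      have hgap := gap_tail X hX (n:ℤ) (by exact_mod_cast hn1) hXn
      have := card_Ufin X (by linarith) (n:ℤ) (4*X/((n:ℤ):ℝ)^11) hgap
      push_cast at this ⊢
      ring_nf at this ⊢
      linarith
    have htail : ∑ n ∈ Finset.Ioc T0 B, ((Ufin X (n:ℤ)).card : ℝ)
        ≤ 2 * (B:ℝ) + 8*X * (1/10 * (1/(T0:ℝ)^10)) := by
      calc ∑ n ∈ Finset.Ioc T0 B, ((Ufin X (n:ℤ)).card : ℝ)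
          ≤ ∑ n ∈ Finset.Ioc T0 B, (2 + 8*X/((n:ℝ))^11) :=
            Finset.sum_le_sum htailterm
        _ = (Finset.Ioc T0 B).card * 2 + 8*X * ∑ n ∈ Finset.Ioc T0 B, (1:ℝ)/((n:ℝ))^11 := by
            rw [Finset.sum_add_distrib, Finset.sum_const, nsmul_eq_mul, Finset.mul_sum]
            congr 1
            refine Finset.sum_congr rfl (fun n _ => ?_)
            ring
        _ ≤ 2 * (B:ℝ) + 8*X * (1/10 * (1/(T0:ℝ)^10)) := by
            have hc : ((Finset.Ioc T0 B).card : ℝ) ≤ (B:ℝ) := by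
              rw [Nat.card_Ioc]
              have : B - T0 ≤ B := by omega
              exact_mod_cast this
            have hts := tail_sum T0 hT0ge1 B
            have h8X : (0:ℝ) ≤ 8*X := by linarith
            nlinarith [mul_le_mul_of_nonneg_left hts h8X]
    -- tail closed form
    have h2T0 : X ^ ((1:ℝ)/22) ≤ 2*(T0:ℝ) := by
      have h1 := Nat.lt_floor_add_one (X ^ ((1:ℝ)/22))
      have h2 : (1:ℝ) ≤ (T0:ℝ) := by exact_mod_cast hT0ge1
      push_cast at h1
      linarith
    have hT0pos : (0:ℝ) < (T0:ℝ)^10 := by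
      have : (0:ℝ) < (T0:ℝ) := by exact_mod_cast hT0ge1
      positivity
    have hp10 : X ^ ((10:ℝ)/22) ≤ 1024*(T0:ℝ)^10 := by
      have hstep : (X ^ ((1:ℝ)/22))^(10:ℕ) ≤ (2*(T0:ℝ))^(10:ℕ) :=
        pow_le_pow_left₀ (by positivity) h2T0 10
      have e1 : (X ^ ((1:ℝ)/22))^(10:ℕ) = X ^ ((10:ℝ)/22) := by
        rw [← Real.rpow_natCast (X ^ ((1:ℝ)/22)) 10, ← Real.rpow_mul hX0.le]
        norm_num
      have e2 : (2*(T0:ℝ))^(10:ℕ) = 1024*(T0:ℝ)^10 := by norm_num [mul_pow]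
      rw [e1, e2] at hstep
      exact hstep
    have htail2 : 8*X * (1/10 * (1/(T0:ℝ)^10)) ≤ 1024 * X ^ ((6:ℝ)/11) := by
      have hfrac : (1:ℝ)/(T0:ℝ)^10 ≤ 1024 / X ^ ((10:ℝ)/22) := by
        rw [div_le_div_iff₀ hT0pos (by positivity)]
        linarith
      have hXdiv : X * (1024 / X ^ ((10:ℝ)/22)) = 1024 * X ^ ((6:ℝ)/11) := by
        rw [mul_div_assoc']
        rw [show X * 1024 = 1024 * X by ring, mul_div_assoc]
        congr 1
        rw [show X / X ^ ((10:ℝ)/22) = X ^ ((1:ℝ)) / X ^ ((10:ℝ)/22) by rw [Real.rpow_one],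
          ← Real.rpow_sub hX0]
        norm_num
      calc 8*X * (1/10 * (1/(T0:ℝ)^10)) ≤ X * (1/(T0:ℝ)^10) := by
            have h1T : (0:ℝ) ≤ 1/(T0:ℝ)^10 := by positivity
            nlinarith
        _ ≤ X * (1024 / X ^ ((10:ℝ)/22)) := by
            apply mul_le_mul_of_nonneg_left hfrac hX0.le
        _ = 1024 * X ^ ((6:ℝ)/11) := hXdiv
    have hheads := hheadsum T0 le_rfl
    calc (Set.ncard _ : ℝ) ≤ (TF.card : ℝ) := hcount
      _ ≤ (∑ n ∈ Finset.Icc 1 T0, ((Ufin X (n:ℤ)).card : ℝ))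
          + ∑ n ∈ Finset.Ioc T0 B, ((Ufin X (n:ℤ)).card : ℝ) := hTFle
      _ ≤ 7 * X ^ ((6:ℝ)/11) + (2 * (B:ℝ) + 8*X * (1/10 * (1/(T0:ℝ)^10))) := by
          linarith
      _ ≤ 7 * X ^ ((6:ℝ)/11) + 2 * (C' * X ^ ((1:ℝ)/5 + η)) + 1024 * X ^ ((6:ℝ)/11) := by
          linarith
      _ ≤ (2048 + 2*C') * (X ^ ((6:ℝ)/11) + X ^ ((1:ℝ)/5 + η)) := by nlinarith
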